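/- The map g : (0,∞) → ℂ, g(x) = x^{1/2 + it} (t ∈ ℝ fixed) is Hölder continuous with exponent 1/2: for all x, y > 0, |x^{1/2+it} − y^{1/2+it}| ≤ (1 + 4|t|^{1/2}) |x − y|^{1/2}. -/

import Mathlib

open Set

lemma aux_exp_I_sub_one_le (θ : ℝ) :
    ‖Complex.exp ((θ : ℂ) * Complex.I) - 1‖ ≤ |θ| := by
  have h : Complex.exp ((θ : ℂ) * Complex.I) - 1
      = ((Real.cos θ - 1 : ℝ) : ℂ) + ((Real.sin θ : ℝ) : ℂ) * Complex.I := by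
    rw [Complex.exp_mul_I]
    push_cast
    ring
  rw [h]
  have habs : ‖(((Real.cos θ - 1 : ℝ) : ℂ) + ((Real.sin θ : ℝ) : ℂ) * Complex.I)‖
      = Real.sqrt ((Real.cos θ - 1) ^ 2 + Real.sin θ ^ 2) := Complex.norm_add_mul_I _ _
  rw [habs]
  have h2 : (Real.cos θ - 1) ^ 2 + Real.sin θ ^ 2 = (2 * Real.sin (θ / 2)) ^ 2 := by
    have h3 : Real.sin (θ / 2) ^ 2 = 1 / 2 - Real.cos θ / 2 := by
      have := Real.sin_sq_eq_half_sub (θ / 2)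
      rwa [show 2 * (θ / 2) = θ by ring] at this
    have h4 := Real.sin_sq_add_cos_sq θ
    nlinarith
  rw [h2, Real.sqrt_sq_eq_abs, abs_mul, abs_two]
  calc 2 * |Real.sin (θ / 2)| ≤ 2 * |θ / 2| :=
        mul_le_mul_of_nonneg_left Real.abs_sin_le_abs (by norm_num)
    _ = |θ| := by rw [abs_div, abs_two]; ring

lemma aux_cpow_eq (t : ℝ) {x : ℝ} (hx : 0 < x) :
    (x : ℂ) ^ ((1/2 : ℂ) + Complex.I * t)
      = (Real.sqrt x : ℂ) * Complex.exp (((t * Real.log x : ℝ) : ℂ) * Complex.I) := by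
  have hx0 : (x : ℂ) ≠ 0 := by exact_mod_cast hx.ne'
  rw [Complex.cpow_add _ _ hx0]
  congr 1
  · rw [Real.sqrt_eq_rpow, Complex.ofReal_cpow hx.le]
    norm_num
  · rw [Complex.cpow_def_of_ne_zero hx0, ← Complex.ofReal_log hx.le]
    congr 1
    push_cast
    ring

lemma aux_main (t x y : ℝ) (hy : 0 < y) (hxy : y ≤ x) :
    ‖(x:ℂ) ^ ((1/2 : ℂ) + Complex.I * t) - (y:ℂ) ^ ((1/2 : ℂ) + Complex.I * t)‖
      ≤ (1 + 4 * Real.sqrt |t|) * Real.sqrt (x - y) := by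
  have hx : 0 < x := lt_of_lt_of_le hy hxy
  set a := Real.sqrt x with ha
  set b := Real.sqrt y with hb
  set c := Real.sqrt (x - y) with hc
  set T := Real.sqrt |t| with hT
  have ha2 : a ^ 2 = x := Real.sq_sqrt hx.le
  have hb2 : b ^ 2 = y := Real.sq_sqrt hy.le
  have hc2 : c ^ 2 = x - y := Real.sq_sqrt (sub_nonneg.2 hxy)
  have hT2 : T ^ 2 = |t| := Real.sq_sqrt (abs_nonneg t)
  have ha0 : 0 ≤ a := Real.sqrt_nonneg _
  have hb0 : 0 ≤ b := Real.sqrt_nonneg _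
  have hc0 : 0 ≤ c := Real.sqrt_nonneg _
  have hT0 : 0 ≤ T := Real.sqrt_nonneg _
  have hb0' : 0 < b := Real.sqrt_pos.2 hy
  -- rewrite the powers
  rw [aux_cpow_eq t hx, aux_cpow_eq t hy]
  set ex := Complex.exp (((t * Real.log x : ℝ) : ℂ) * Complex.I) with hex
  set ey := Complex.exp (((t * Real.log y : ℝ) : ℂ) * Complex.I) with hey
  have hnex : ‖ex‖ = 1 := by
    rw [hex, Complex.norm_exp]
    simp
  have hney : ‖ey‖ = 1 := by
    rw [hey, Complex.norm_exp]
    simp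
  have hsplit : (a : ℂ) * ex - (b : ℂ) * ey
      = ((a : ℝ) - b : ℝ) * ex + (b : ℂ) * (ex - ey) := by
    push_cast
    ring
  rw [hsplit]
  have hdiff : ex - ey = ey * (Complex.exp (((t * (Real.log x - Real.log y) : ℝ) : ℂ) * Complex.I) - 1) := by
    rw [hex, hey, mul_sub, mul_one, ← Complex.exp_add]
    congr 2
    push_cast
    ring
  have hlogle : Real.log x - Real.log y ≤ (x - y) / y := by
    have h1 : Real.log x - Real.log y = Real.log (x / y) := (Real.log_div hx.ne' hy.ne').symm
    rw [h1]
    have := Real.log_le_sub_one_of_pos (div_pos hx hy)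
    calc Real.log (x / y) ≤ x / y - 1 := this
      _ = (x - y) / y := by field_simp
  have hlog0 : 0 ≤ Real.log x - Real.log y := by
    have := Real.log_le_log hy (hxy)
    linarith
  -- bound on the exp difference
  have hexp2 : ‖Complex.exp (((t * (Real.log x - Real.log y) : ℝ) : ℂ) * Complex.I) - 1‖ ≤ 2 := by
    calc ‖Complex.exp (((t * (Real.log x - Real.log y) : ℝ) : ℂ) * Complex.I) - 1‖
        ≤ ‖Complex.exp (((t * (Real.log x - Real.log y) : ℝ) : ℂ) * Complex.I)‖ + ‖(1:ℂ)‖ :=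
          norm_sub_le _ _
      _ ≤ 2 := by
          rw [Complex.norm_exp]
          norm_num
  have hexpt : ‖Complex.exp (((t * (Real.log x - Real.log y) : ℝ) : ℂ) * Complex.I) - 1‖
      ≤ |t| * ((x - y) / y) := by
    calc ‖Complex.exp (((t * (Real.log x - Real.log y) : ℝ) : ℂ) * Complex.I) - 1‖
        ≤ |t * (Real.log x - Real.log y)| := aux_exp_I_sub_one_le _
      _ = |t| * (Real.log x - Real.log y) := by
          rw [abs_mul, abs_of_nonneg hlog0]
      _ ≤ |t| * ((x - y) / y) := by
          apply mul_le_mul_of_nonneg_left hlogle (abs_nonneg t)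
  -- the two terms
  have hterm1 : ‖((a - b : ℝ) : ℂ) * ex‖ ≤ c := by
    rw [norm_mul, hnex, mul_one, Complex.norm_real, Real.norm_eq_abs,
      abs_of_nonneg (sub_nonneg.2 (Real.sqrt_le_sqrt hxy))]
    nlinarith [mul_nonneg hb0 hc0]
  have hterm2 : ‖(b : ℂ) * (ex - ey)‖ ≤ 4 * T * c := by
    rw [norm_mul, Complex.norm_real, Real.norm_eq_abs, abs_of_nonneg hb0, hdiff, norm_mul, hney,
      one_mul]
    by_cases hcase : |t| * (x - y) ≤ y
    · -- small case: use the |θ| bound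
      calc b * ‖Complex.exp (((t * (Real.log x - Real.log y) : ℝ) : ℂ) * Complex.I) - 1‖
          ≤ b * (|t| * ((x - y) / y)) := by
            apply mul_le_mul_of_nonneg_left hexpt hb0
        _ ≤ 4 * T * c := by
            rw [← hT2, ← hc2, ← hb2]
            rw [← hT2, ← hc2, ← hb2] at hcase
            have key : b * ((T^2) * ((c^2) / b^2)) = T^2 * c^2 / b := by
              field_simp
            rw [key]
            have h1 : T * c ≤ b := le_of_pow_le_pow_left₀ two_ne_zero hb0
              (by rw [mul_pow]; exact hcase)
            have h2 : T^2 * c^2 / b ≤ T * c := by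
              rw [div_le_iff₀ hb0']
              nlinarith [mul_nonneg hT0 hc0]
            have h3 : 0 ≤ T * c := mul_nonneg hT0 hc0
            linarith
    · -- large case: use the bound 2
      push_neg at hcase
      calc b * ‖Complex.exp (((t * (Real.log x - Real.log y) : ℝ) : ℂ) * Complex.I) - 1‖
          ≤ b * 2 := mul_le_mul_of_nonneg_left hexp2 hb0
        _ ≤ 4 * T * c := by
            rw [← hT2, ← hc2, ← hb2] at hcase
            have h1 : b < T * c := lt_of_pow_lt_pow_left₀ 2 (mul_nonneg hT0 hc0)
              (by rw [mul_pow]; exact hcase)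
            linarith
  calc ‖((a - b : ℝ) : ℂ) * ex + (b : ℂ) * (ex - ey)‖
      ≤ ‖((a - b : ℝ) : ℂ) * ex‖ + ‖(b : ℂ) * (ex - ey)‖ := norm_add_le _ _
    _ ≤ c + 4 * T * c := add_le_add hterm1 hterm2
    _ = (1 + 4 * T) * c := by ring

/-- The map `x ↦ x^{1/2+it}` on `(0,∞)` is Hölder continuous with exponent `1/2`:
`|x^{1/2+it} - y^{1/2+it}| ≤ (1 + 4|t|^{1/2}) |x - y|^{1/2}`. -/
theorem stmt_10 (t : ℝ) (x y : ℝ) (hx : 0 < x) (hy : 0 < y) :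
    ‖(x:ℂ) ^ ((1/2 : ℂ) + Complex.I * t) - (y:ℂ) ^ ((1/2 : ℂ) + Complex.I * t)‖
      ≤ (1 + 4 * Real.sqrt |t|) * Real.sqrt |x - y| := by
  rcases le_total y x with h | h
  · rw [abs_of_nonneg (sub_nonneg.2 h)]
    exact aux_main t x y hy h
  · rw [abs_of_nonpos (sub_nonpos.2 h), neg_sub, norm_sub_rev]
    exact aux_main t y x hx h
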